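/- Let p be an odd prime, n ≥ 1, a an integer coprime to p, and m, m' integers with m·m' ≡ 1 (mod pⁿ). Define the Weil representation ρ of SL₂(ℤ) on the free complex vector space ℂL with basis e^γ indexed by γ ∈ ℤ/pⁿℤ by ρ(T)e^γ = e(aγ²/pⁿ)e^γ and ρ(S)e^γ = (e(-sign/8)/p^{n/2}) ∑_{β} e(-2aγβ/pⁿ) e^β, where e(sign/8) equals (a/p)i if p ≡ 3 mod 4 and n odd, (a/p) if p ≡ 1 mod 4 and n odd, and 1 if n even. Then ρ(S)ρ(T^{m'})ρ(S)ρ(T^m)ρ(S) e^γ = e(-a m' γ²/pⁿ) e^{-m'γ} if n is even, and equals (-m/p)·e(-a m' γ²/pⁿ)·e^{-m'γ} if n is odd. -/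

import Mathlib

open Complex Matrix MatrixGroups CongruenceSubgroup ModularGroup

noncomputable section

/-- `e(x) = exp(2πix)`. -/
def eC (x : ℂ) : ℂ := Complex.exp (2 * Real.pi * Complex.I * x)

/-- The basis vector `e^γ` of `ℂ L`. -/
def bas {α : Type*} [DecidableEq α] (γ : α) : α → ℂ := fun x => if x = γ then 1 else 0

/-- The value `e(sign(L_{pⁿ}(a))/8)`: it is `(a/p)·i` for `p ≡ 3 (mod 4)`, `n` odd,
`(a/p)` for `p ≡ 1 (mod 4)`, `n` odd, and `1` for `n` even. -/
def sgOdd (p : ℕ) [Fact p.Prime] (n : ℕ) (a : ℤ) : ℂ :=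
  if Odd n then
    (if p % 4 = 3 then (legendreSym p a : ℂ) * Complex.I else (legendreSym p a : ℂ))
  else 1





namespace Stmt3Aux


lemma eC_add (x y : ℂ) : eC (x + y) = eC x * eC y := by
  simp [eC, mul_add, Complex.exp_add]

lemma eC_int (k : ℤ) : eC k = 1 := by
  rw [eC, show 2 * (Real.pi:ℂ) * Complex.I * k = k * (2 * Real.pi * Complex.I) by ring]
  exact Complex.exp_int_mul_two_pi_mul_I k

lemma eC_ne_zero (x : ℂ) : eC x ≠ 0 := Complex.exp_ne_zero _

/-- `e(x/M)` for integer `x`. -/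
def EM (M : ℕ) (x : ℤ) : ℂ := eC ((x : ℂ) / (M : ℕ))

lemma EM_add (M : ℕ) (x y : ℤ) : EM M (x + y) = EM M x * EM M y := by
  rw [EM, EM, EM, ← eC_add]
  push_cast
  ring_nf

lemma EM_congr (M : ℕ) [NeZero M] {x y : ℤ} (h : x ≡ y [ZMOD M]) : EM M x = EM M y := by
  obtain ⟨t, ht⟩ := h.dvd
  have hM : (M : ℂ) ≠ 0 := Nat.cast_ne_zero.mpr (NeZero.ne M)
  have hy : y = x + M * t := by linarith
  subst hy
  rw [EM, EM]
  have : ((x + M*t : ℤ) : ℂ) / M = (x : ℂ)/M + (t:ℤ) := by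
    push_cast; field_simp
  rw [this, eC_add, eC_int, mul_one]

lemma EM_one_iff (M : ℕ) [NeZero M] (x : ℤ) : EM M x = 1 ↔ (M:ℤ) ∣ x := by
  have hM : (M : ℂ) ≠ 0 := Nat.cast_ne_zero.mpr (NeZero.ne M)
  constructor
  · intro h
    rw [EM, eC, Complex.exp_eq_one_iff] at h
    obtain ⟨k, hk⟩ := h
    have h2 : (2*(Real.pi:ℂ)*Complex.I) ≠ 0 := by
      simp [Real.pi_ne_zero, Complex.I_ne_zero, Complex.ofReal_ne_zero]
    have hxk : ((x:ℂ)/M) = k := by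
      apply mul_left_cancel₀ h2
      rw [hk]; ring
    have hx : (x : ℂ) = ((M * k : ℤ) : ℂ) := by
      push_cast
      field_simp at hxk
      linear_combination hxk
    exact ⟨k, Int.cast_injective hx⟩
  · rintro ⟨c, rfl⟩
    have : ((M * c : ℤ) : ℂ)/M = (c : ℤ) := by push_cast; field_simp
    rw [EM, this, eC_int]

lemma eC_zero : eC 0 = 1 := by simpa using eC_int 0

lemma EM_zero (M : ℕ) : EM M 0 = 1 := by simp [EM, eC_zero]

lemma EM_zpow (M : ℕ) (x : ℤ) (k : ℤ) : EM M x ^ k = EM M (k * x) := by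
  rw [EM, EM, eC, eC, ← Complex.exp_int_mul]
  congr 1
  push_cast
  ring

lemma EM_ne_zero (M : ℕ) (x : ℤ) : EM M x ≠ 0 := eC_ne_zero _

/-- The standard additive character of `ZMod M`. -/
def ψ (M : ℕ) (t : ZMod M) : ℂ := EM M t.val

lemma ψ_intCast (M : ℕ) [NeZero M] (x : ℤ) : ψ M (x : ZMod M) = EM M x := by
  apply EM_congr
  unfold Int.ModEq
  rw [ZMod.val_intCast, Int.emod_emod_of_dvd _ dvd_rfl]

lemma ψ_natCast (M : ℕ) [NeZero M] (x : ℕ) : ψ M (x : ZMod M) = EM M x := by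
  have : ((x:ℤ) : ZMod M) = (x : ZMod M) := by push_cast; rfl
  rw [← this, ψ_intCast]

lemma cast_val (M : ℕ) [NeZero M] (t : ZMod M) : (((t.val : ℤ)) : ZMod M) = t := by
  push_cast [ZMod.natCast_val, ZMod.cast_id]
  rfl

lemma ψ_eq (M : ℕ) [NeZero M] (t : ZMod M) : ψ M t = EM M t.val := rfl

lemma ψ_add (M : ℕ) [NeZero M] (s t : ZMod M) : ψ M (s + t) = ψ M s * ψ M t := by
  have : s + t = (((s.val : ℤ) + (t.val : ℤ) : ℤ) : ZMod M) := by
    push_cast [ZMod.natCast_val, ZMod.cast_id]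
    rfl
  rw [this, ψ_intCast, EM_add]
  rw [ψ_eq, ψ_eq]

lemma ψ_zero (M : ℕ) [NeZero M] : ψ M 0 = 1 := by
  have : (0 : ZMod M) = ((0:ℤ) : ZMod M) := by norm_num
  rw [this, ψ_intCast, EM_zero]

lemma ψ_eq_one_iff (M : ℕ) [NeZero M] (t : ZMod M) : ψ M t = 1 ↔ t = 0 := by
  rw [ψ_eq, EM_one_iff]
  constructor
  · intro h
    have h' : (M:ℕ) ∣ t.val := Int.ofNat_dvd.mp h
    have := ZMod.val_lt t
    exact (ZMod.val_eq_zero t).mp (Nat.eq_zero_of_dvd_of_lt h' this)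
  · rintro rfl
    simp [ZMod.val_zero]

lemma ψ_zpow (M : ℕ) [NeZero M] (t : ZMod M) (k : ℤ) : ψ M t ^ k = ψ M ((k : ZMod M) * t) := by
  rw [ψ_eq, EM_zpow, ← ψ_intCast]
  congr 1
  push_cast [ZMod.natCast_val, ZMod.cast_id]
  rfl

lemma ψ_mul_val (M : ℕ) [NeZero M] (s t : ZMod M) : ψ M (s * t) = EM M ((s.val : ℤ) * t.val) := by
  rw [← ψ_intCast]
  congr 1
  push_cast [ZMod.natCast_val, ZMod.cast_id]
  rfl

lemma ψ_orth (M : ℕ) [NeZero M] (t : ZMod M) :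
    ∑ v : ZMod M, ψ M (t * v) = if t = 0 then (M : ℂ) else 0 := by
  split_ifs with h
  · subst h
    simp only [zero_mul, ψ_zero]
    simp [ZMod.card]
  · have hψt : ψ M t ≠ 1 := fun h1 => h ((ψ_eq_one_iff M t).mp h1)
    have key : ψ M t * ∑ v : ZMod M, ψ M (t * v) = ∑ v : ZMod M, ψ M (t * v) := by
      rw [Finset.mul_sum]
      rw [← Equiv.sum_comp (Equiv.addLeft 1) (fun v => ψ M (t * v))]
      apply Finset.sum_congr rfl
      intro v _
      rw [← ψ_add]
      congr 1
      simp [Equiv.coe_addLeft]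
      ring
    have h0 : (ψ M t - 1) * ∑ v : ZMod M, ψ M (t * v) = 0 := by
      linear_combination key
    rcases mul_eq_zero.mp h0 with h1 | h1
    · exact absurd (by linear_combination h1) hψt
    · exact h1

/-- decomposition map -/
def spl (M₁ M₂ M : ℕ) (uv : ZMod M₁ × ZMod M₂) : ZMod M :=
  ((uv.1.val + M₁ * uv.2.val : ℕ) : ZMod M)

lemma spl_lt (M₁ M₂ : ℕ) [NeZero M₁] [NeZero M₂] (uv : ZMod M₁ × ZMod M₂) :
    uv.1.val + M₁ * uv.2.val < M₁ * M₂ := by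
  have h1 := ZMod.val_lt uv.1
  have h2 := ZMod.val_lt uv.2
  calc uv.1.val + M₁ * uv.2.val < M₁ + M₁ * uv.2.val := by omega
    _ = M₁ * (uv.2.val + 1) := by ring
    _ ≤ M₁ * M₂ := Nat.mul_le_mul_left _ (by omega)

lemma spl_val (M₁ M₂ M : ℕ) [NeZero M₁] [NeZero M₂] [NeZero M] (hM : M = M₁ * M₂)
    (uv : ZMod M₁ × ZMod M₂) :
    (spl M₁ M₂ M uv).val = uv.1.val + M₁ * uv.2.val := by
  subst hM
  exact ZMod.val_natCast_of_lt (spl_lt M₁ M₂ uv)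

lemma spl_bij (M₁ M₂ M : ℕ) [NeZero M₁] [NeZero M₂] [NeZero M] (hM : M = M₁ * M₂) :
    Function.Bijective (spl M₁ M₂ M) := by
  rw [Fintype.bijective_iff_injective_and_card]
  constructor
  · intro x y hxy
    have hx := spl_val M₁ M₂ M hM x
    have hy := spl_val M₁ M₂ M hM y
    have : (spl M₁ M₂ M x).val = (spl M₁ M₂ M y).val := by rw [hxy]
    rw [hx, hy] at this
    have hu : x.1.val = y.1.val := by
      have := congrArg (· % M₁) this
      simpa [Nat.add_mul_mod_self_left, Nat.mod_eq_of_lt (ZMod.val_lt x.1),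
        Nat.mod_eq_of_lt (ZMod.val_lt y.1)] using this
    have hv : x.2.val = y.2.val := by
      have hM₁ : 0 < M₁ := Nat.pos_of_ne_zero (NeZero.ne M₁)
      have := this
      rw [hu] at this
      have := Nat.add_left_cancel this
      exact Nat.eq_of_mul_eq_mul_left hM₁ this
    have e1 : x.1 = y.1 := ZMod.val_injective _ hu
    have e2 : x.2 = y.2 := ZMod.val_injective _ hv
    exact Prod.ext e1 e2
  · simp [ZMod.card, hM]

lemma gauss_split (M₁ M₂ M : ℕ) [NeZero M₁] [NeZero M₂] [NeZero M] (hM : M = M₁ * M₂)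
    (hd : M₂ ∣ M₁) (b : ℤ) (hco : IsCoprime (2 * b) (M₂ : ℤ)) :
    ∑ β : ZMod M, EM M (b * (β.val : ℤ)^2) =
      (M₂ : ℂ) * ∑ u : ZMod M₁, if (M₂:ℤ) ∣ (u.val : ℤ) then EM M (b * (u.val : ℤ)^2) else 0 := by
  rw [← Function.Bijective.sum_comp (spl_bij M₁ M₂ M hM) (fun β => EM M (b * (β.val:ℤ)^2))]
  rw [Fintype.sum_prod_type]
  have key : ∀ (u : ZMod M₁) (v : ZMod M₂),
      EM M (b * (((spl M₁ M₂ M (u,v)).val : ℤ))^2) =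
        EM M (b * (u.val:ℤ)^2) * ψ M₂ (((2*b*u.val : ℤ) : ZMod M₂) * v) := by
    intro u v
    rw [spl_val M₁ M₂ M hM (u,v)]
    have hψ : ψ M₂ (((2*b*u.val : ℤ) : ZMod M₂) * v) = EM M₂ (2*b*u.val*v.val) := by
      rw [show ((2*b*u.val : ℤ) : ZMod M₂) * v = ((2*b*(u.val:ℤ)*(v.val:ℤ) : ℤ) : ZMod M₂) by
        push_cast [ZMod.natCast_val, ZMod.cast_id]; ring]
      rw [ψ_intCast]
    rw [hψ]
    have hEM2 : EM M₂ (2*b*u.val*v.val) = EM M (M₁ * (2*b*u.val*v.val)) := by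
      rw [EM, EM, hM]
      congr 1
      have h1 : (M₁ : ℂ) ≠ 0 := Nat.cast_ne_zero.mpr (NeZero.ne M₁)
      have h2 : (M₂ : ℂ) ≠ 0 := Nat.cast_ne_zero.mpr (NeZero.ne M₂)
      push_cast
      field_simp
    rw [hEM2, ← EM_add]
    apply EM_congr
    obtain ⟨d, hdd⟩ := hd
    have hsq : (M:ℤ) ∣ (M₁:ℤ)^2 := ⟨d, by push_cast [hM, hdd]; ring⟩
    apply Int.ModEq.symm
    rw [Int.modEq_iff_dvd]
    have hdiff : b * ((u.val:ℤ) + (M₁:ℤ) * (v.val:ℤ))^2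
        - (b * (u.val:ℤ)^2 + (M₁:ℤ) * (2*b*(u.val:ℤ)*(v.val:ℤ)))
        = (M₁:ℤ)^2 * (b * (v.val:ℤ)^2) := by ring
    calc (M:ℤ) ∣ (M₁:ℤ)^2 * (b * (v.val:ℤ)^2) := hsq.mul_right _
      _ = _ := by push_cast; linarith [hdiff]
  calc ∑ u : ZMod M₁, ∑ v : ZMod M₂, EM M (b * (((spl M₁ M₂ M (u,v)).val : ℤ))^2)
      = ∑ u : ZMod M₁, EM M (b * (u.val:ℤ)^2) *
          (if ((2*b*u.val : ℤ) : ZMod M₂) = 0 then (M₂:ℂ) else 0) := by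
        apply Finset.sum_congr rfl
        intro u _
        rw [show (∑ v : ZMod M₂, EM M (b * (((spl M₁ M₂ M (u,v)).val : ℤ))^2))
            = ∑ v : ZMod M₂, EM M (b * (u.val:ℤ)^2) *
              ψ M₂ (((2*b*u.val : ℤ) : ZMod M₂) * v) from
          Finset.sum_congr rfl fun v _ => key u v]
        rw [← Finset.mul_sum, ψ_orth]
    _ = (M₂ : ℂ) * ∑ u : ZMod M₁,
          if (M₂:ℤ) ∣ (u.val : ℤ) then EM M (b * (u.val : ℤ)^2) else 0 := by
        rw [Finset.mul_sum]
        apply Finset.sum_congr rfl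
        intro u _
        have hcond : (((2*b*u.val : ℤ) : ZMod M₂) = 0) ↔ ((M₂:ℤ) ∣ (u.val : ℤ)) := by
          rw [ZMod.intCast_zmod_eq_zero_iff_dvd]
          constructor
          · intro h
            exact (hco.symm).dvd_of_dvd_mul_left h
          · intro h
            exact Dvd.dvd.mul_left h _
        simp only [hcond]
        split_ifs with h
        · ring
        · ring

lemma EM_scale (M₁ M₂ M : ℕ) [NeZero M₁] [NeZero M₂] (hM : M = M₁ * M₂) (x : ℤ) :
    EM M ((M₁:ℤ) * x) = EM M₂ x := by
  rw [EM, EM, hM]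
  congr 1
  have h1 : (M₁ : ℂ) ≠ 0 := Nat.cast_ne_zero.mpr (NeZero.ne M₁)
  have h2 : (M₂ : ℂ) ≠ 0 := Nat.cast_ne_zero.mpr (NeZero.ne M₂)
  push_cast
  field_simp

lemma dvd_iff_zero_nat (K : ℕ) [NeZero K] (u : ZMod K) : (K ∣ u.val) ↔ u = 0 := by
  constructor
  · intro h
    exact (ZMod.val_eq_zero u).mp (Nat.eq_zero_of_dvd_of_lt h (ZMod.val_lt u))
  · rintro rfl
    simp [ZMod.val_zero]

lemma dvd_iff_zero (K : ℕ) [NeZero K] (u : ZMod K) : ((K:ℤ) ∣ (u.val : ℤ)) ↔ u = 0 := by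
  rw [Int.natCast_dvd_natCast]
  exact dvd_iff_zero_nat K u

lemma G_even (p k M : ℕ) [NeZero p] [NeZero M] (hM : M = p^k * p^k) (b : ℤ)
    (hco : IsCoprime (2 * b) ((p:ℤ)^k)) :
    ∑ β : ZMod M, EM M (b * (β.val : ℤ)^2) = ((p:ℂ)^k) := by
  haveI : NeZero (p^k) := ⟨pow_ne_zero k (NeZero.ne p)⟩
  rw [gauss_split (p^k) (p^k) M hM dvd_rfl b (by push_cast; exact hco)]
  have h1 : ∀ u : ZMod (p^k), (((p^k : ℕ):ℤ) ∣ (u.val : ℤ)) ↔ u = 0 :=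
    fun u => dvd_iff_zero (p^k) u
  simp only [h1]
  rw [Finset.sum_eq_single 0 (fun u _ hu => by rw [if_neg hu])
    (fun h => absurd (Finset.mem_univ _) h)]
  simp only [if_pos rfl, ZMod.val_zero]
  norm_num [EM_zero]

lemma G_odd (p l M : ℕ) [NeZero p] [NeZero M] (hM : M = p^(l+1) * p^l) (b : ℤ)
    (hco : IsCoprime (2 * b) ((p:ℤ)^l)) :
    ∑ β : ZMod M, EM M (b * (β.val : ℤ)^2) =
      ((p:ℂ)^l) * ∑ w : ZMod p, EM p (b * (w.val : ℤ)^2) := by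
  haveI h1 : NeZero (p^l) := ⟨pow_ne_zero l (NeZero.ne p)⟩
  haveI h2 : NeZero (p^(l+1)) := ⟨pow_ne_zero _ (NeZero.ne p)⟩
  rw [gauss_split (p^(l+1)) (p^l) M hM (pow_dvd_pow p (Nat.le_succ l)) b
    (by push_cast; exact hco)]
  have key : ∑ u : ZMod (p^(l+1)), (if ((p^l : ℕ):ℤ) ∣ (u.val : ℤ)
        then EM M (b * (u.val : ℤ)^2) else 0)
      = ∑ w : ZMod p, EM p (b * (w.val : ℤ)^2) := by
    rw [← Function.Bijective.sum_comp (spl_bij (p^l) p (p^(l+1)) (pow_succ p l))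
      (fun u => if ((p^l : ℕ):ℤ) ∣ (u.val : ℤ) then EM M (b * (u.val : ℤ)^2) else 0)]
    simp only [Function.comp, spl_val (p^l) p (p^(l+1)) (pow_succ p l)]
    have hcond : ∀ uv : ZMod (p^l) × ZMod p,
        (((p^l : ℕ):ℤ) ∣ ((uv.1.val + p^l * uv.2.val : ℕ) : ℤ)) ↔ uv.1 = 0 := by
      intro uv
      rw [Int.natCast_dvd_natCast, Nat.add_comm, Nat.dvd_add_right (dvd_mul_right _ _)]
      exact dvd_iff_zero_nat (p^l) uv.1
    simp only [hcond]
    rw [Fintype.sum_prod_type]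
    rw [Finset.sum_eq_single 0 (fun u _ hu => by
        rw [Finset.sum_eq_zero (fun w _ => by rw [if_neg hu])])
      (fun h => absurd (Finset.mem_univ _) h)]
    apply Finset.sum_congr rfl
    intro w _
    rw [if_pos rfl]
    simp only [ZMod.val_zero, Nat.zero_add]
    have harg : (b * (((p^l * w.val : ℕ)):ℤ)^2) = ((p^(2*l) : ℕ):ℤ) * (b * (w.val:ℤ)^2) := by
      push_cast; ring
    rw [harg, EM_scale (p^(2*l)) p M (by rw [hM]; ring)]
  rw [key]
  push_cast
  ring

lemma sq_count (p : ℕ) [Fact p.Prime] [NeZero p] (C : ZMod p) (hp2 : p ≠ 2) :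
    ∑ w : ZMod p, ψ p (C * w^2) =
      ∑ x : ZMod p, (((legendreSym p (x.val : ℤ) + 1 : ℤ) : ℂ)) * ψ p (C * x) := by
  rw [← Finset.sum_fiberwise Finset.univ (fun w : ZMod p => w^2) (fun w => ψ p (C * w^2))]
  apply Finset.sum_congr rfl
  intro x _
  have : ∀ w ∈ Finset.univ.filter (fun w : ZMod p => w^2 = x), ψ p (C * w^2) = ψ p (C * x) := by
    intro w hw
    rw [(Finset.mem_filter.mp hw).2]
  rw [Finset.sum_congr rfl this, Finset.sum_const]
  have hcard : (Finset.univ.filter (fun w : ZMod p => w^2 = x)).card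
      = ({w : ZMod p | w^2 = ((x.val : ℤ) : ZMod p)}.toFinset).card := by
    congr 1
    ext w
    simp [ZMod.natCast_val, ZMod.cast_id]
  rw [nsmul_eq_mul, hcard]
  congr 1
  have := legendreSym.card_sqrts p hp2 (x.val : ℤ)
  exact_mod_cast congrArg (fun z : ℤ => (z : ℂ)) this

lemma ratio (p : ℕ) [Fact p.Prime] [NeZero p] (hp2 : p ≠ 2) (b u : ℤ)
    (hb : ((b : ZMod p)) ≠ 0) (hu : ((u : ZMod p)) ≠ 0) :
    ∑ w : ZMod p, EM p (b * u * (w.val:ℤ)^2)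
      = (legendreSym p u : ℂ) * ∑ w : ZMod p, EM p (b * (w.val:ℤ)^2) := by
  have conv1 : ∀ (c : ℤ), ∑ w : ZMod p, EM p (c * (w.val:ℤ)^2)
      = ∑ w : ZMod p, ψ p ((c : ZMod p) * w^2) := by
    intro c
    apply Finset.sum_congr rfl
    intro w _
    rw [show ((c : ZMod p) * w^2) = ((c * (w.val:ℤ)^2 : ℤ) : ZMod p) by
      push_cast [ZMod.natCast_val, ZMod.cast_id]; ring]
    rw [ψ_intCast]
  rw [conv1, conv1]
  -- reduce to character sums
  have expand : ∀ (C : ZMod p), C ≠ 0 → ∑ w : ZMod p, ψ p (C * w^2)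
      = ∑ x : ZMod p, ((legendreSym p (x.val:ℤ) : ℤ) : ℂ) * ψ p (C * x) := by
    intro C hC
    rw [sq_count p C hp2]
    have split : ∀ x : ZMod p, (((legendreSym p (x.val : ℤ) + 1 : ℤ) : ℂ)) * ψ p (C * x)
        = ((legendreSym p (x.val:ℤ) : ℤ) : ℂ) * ψ p (C * x) + ψ p (C * x) := by
      intro x; push_cast; ring
    rw [Finset.sum_congr rfl (fun x _ => split x), Finset.sum_add_distrib, ψ_orth p C,
      if_neg hC, add_zero]
  have hbu : ((b * u : ℤ) : ZMod p) ≠ 0 := by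
    push_cast
    exact mul_ne_zero hb hu
  rw [show ((b * u : ℤ) : ZMod p) = (b : ZMod p) * (u : ZMod p) by push_cast; ring] at hbu
  rw [show ∑ w : ZMod p, ψ p (((b * u : ℤ) : ZMod p) * w^2)
      = ∑ w : ZMod p, ψ p ((b : ZMod p) * (u : ZMod p) * w^2) by
    apply Finset.sum_congr rfl; intro w _; congr 2; push_cast; ring]
  rw [expand _ hbu, expand _ hb]
  -- now substitute x ↦ u⁻¹ x
  have hUinv : (u : ZMod p)⁻¹ ≠ 0 := inv_ne_zero hu
  rw [← Equiv.sum_comp (Equiv.mulLeft₀ ((u : ZMod p)⁻¹) hUinv)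
    (fun x => ((legendreSym p (x.val:ℤ) : ℤ) : ℂ) * ψ p ((b : ZMod p) * (u : ZMod p) * x))]
  rw [Finset.mul_sum]
  apply Finset.sum_congr rfl
  intro x _
  simp only [Equiv.mulLeft₀_apply]
  have harg : (b : ZMod p) * (u : ZMod p) * ((u : ZMod p)⁻¹ * x) = (b : ZMod p) * x := by
    calc (b:ZMod p) * (u:ZMod p) * ((u:ZMod p)⁻¹ * x)
        = (b:ZMod p) * x * ((u:ZMod p) * (u:ZMod p)⁻¹) := by ring
      _ = (b:ZMod p) * x := by rw [mul_inv_cancel₀ hu, mul_one]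
  rw [harg]
  have hleg : ∀ y : ZMod p, ((legendreSym p (y.val:ℤ) : ℤ) : ℂ)
      = ((quadraticChar (ZMod p) y : ℤ) : ℂ) := by
    intro y
    congr 1
    rw [legendreSym]
    congr 1
    push_cast [ZMod.natCast_val, ZMod.cast_id]
    rfl
  rw [hleg, hleg]
  have hquad : (quadraticChar (ZMod p) ((u : ZMod p)⁻¹ * x) : ℤ)
      = quadraticChar (ZMod p) (u : ZMod p) * quadraticChar (ZMod p) x := by
    rw [_root_.map_mul]
    congr 1
    have h1 : quadraticChar (ZMod p) ((u : ZMod p)⁻¹) * quadraticChar (ZMod p) (u : ZMod p)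
        = 1 := by
      rw [← _root_.map_mul, inv_mul_cancel₀ hu, _root_.map_one]
    have h2 : quadraticChar (ZMod p) (u : ZMod p) * quadraticChar (ZMod p) (u : ZMod p) = 1 := by
      rw [← sq]; exact quadraticChar_sq_one hu
    calc quadraticChar (ZMod p) ((u : ZMod p)⁻¹)
        = quadraticChar (ZMod p) ((u : ZMod p)⁻¹) *
            (quadraticChar (ZMod p) (u : ZMod p) * quadraticChar (ZMod p) (u : ZMod p)) := by
          rw [h2, mul_one]
      _ = (quadraticChar (ZMod p) ((u : ZMod p)⁻¹) * quadraticChar (ZMod p) (u : ZMod p)) *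
            quadraticChar (ZMod p) (u : ZMod p) := by ring
      _ = quadraticChar (ZMod p) (u : ZMod p) := by rw [h1, one_mul]
  rw [hquad, legendreSym]
  push_cast
  ring

lemma psi_ne_zero_dummy : True := trivial
lemma ψ_ne_zero (M : ℕ) (t : ZMod M) : ψ M t ≠ 0 := EM_ne_zero _ _

lemma zpow_apply_smul {V : Type*} [AddCommGroup V] [Module ℂ V] (f : V ≃ₗ[ℂ] V) (v : V) (s : ℂ)
    (hs : s ≠ 0) (h : f v = s • v) : ∀ k : ℤ, (f ^ k) v = (s ^ k) • v := by
  have hn : ∀ j : ℕ, (f ^ j) v = (s ^ j) • v := by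
    intro j
    induction j with
    | zero => simp
    | succ i ih =>
      rw [pow_succ]
      have : (f ^ i * f) v = (f ^ i) (f v) := rfl
      rw [this, h, _root_.map_smul, ih, smul_smul, pow_succ]
      ring_nf
  intro k
  rcases Int.eq_nat_or_neg k with ⟨j, rfl | rfl⟩
  · rw [zpow_natCast, zpow_natCast]; exact hn j
  · rw [_root_.zpow_neg, zpow_natCast, _root_.zpow_neg, zpow_natCast]
    apply (f ^ j).injective
    have h1 : (f ^ j) ((f ^ j)⁻¹ v) = v := by
      have : (f ^ j * (f ^ j)⁻¹) v = v := by rw [mul_inv_cancel]; rfl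
      exact this
    rw [h1, _root_.map_smul, hn j, smul_smul, inv_mul_cancel₀ (pow_ne_zero j hs), one_smul]

open ModularGroup in
lemma ST_rel : S * T ^ (1:ℤ) * S * T ^ (1:ℤ) * S * T ^ (1:ℤ) = S * S := by
  simp only [zpow_one]
  ext i j
  fin_cases i <;> fin_cases j <;>
    simp [Matrix.mul_apply, Fin.sum_univ_succ, ModularGroup.coe_S, ModularGroup.coe_T]

lemma key_calc (N : ℕ) [NeZero N] (A : ZMod N) (c : ℂ)
    (ρ : SL(2,ℤ) →* ((ZMod N → ℂ) ≃ₗ[ℂ] (ZMod N → ℂ)))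
    (hS' : ∀ δ : ZMod N, ρ ModularGroup.S (bas δ) =
      c • ∑ β : ZMod N, ψ N (-(2*A*δ*β)) • bas β)
    (hT' : ∀ (k : ℤ) (δ : ZMod N), ρ (ModularGroup.T ^ k) (bas δ) =
      ψ N ((k : ZMod N) * (A*δ^2)) • bas δ)
    (h2A : ∀ x : ZMod N, 2*A*x = 0 → x = 0)
    (m₀ m₀' : ℤ) (hm : (m₀ : ZMod N) * (m₀' : ZMod N) = 1) (γ : ZMod N) :
    ρ (ModularGroup.S * ModularGroup.T^m₀' * ModularGroup.S * ModularGroup.T^m₀ *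
        ModularGroup.S) (bas γ)
      = (c^3 * (N:ℂ) * (∑ β : ZMod N, ψ N (A * (m₀ : ZMod N) * β^2))
          * ψ N (-(A * (m₀' : ZMod N) * γ^2))) • bas (-(m₀' : ZMod N) * γ) := by
  set M₀ : ZMod N := (m₀ : ZMod N) with hM₀
  set M₀' : ZMod N := (m₀' : ZMod N) with hM₀'
  set GG : ℂ := ∑ β : ZMod N, ψ N (A * M₀ * β^2) with hGG
  have stepT : ∀ (k : ℤ) (φ : ZMod N → ℂ),
      ρ (ModularGroup.T ^ k) (∑ β : ZMod N, φ β • bas β)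
        = ∑ β : ZMod N, (φ β * ψ N ((k : ZMod N) * (A*β^2))) • bas β := by
    intro k φ
    rw [map_sum]
    refine Finset.sum_congr rfl fun β _ => ?_
    rw [_root_.map_smul, hT' k β, smul_smul]
  have stepS : ∀ (φ : ZMod N → ℂ),
      ρ ModularGroup.S (∑ β : ZMod N, φ β • bas β)
        = ∑ δ : ZMod N, (c * ∑ β : ZMod N, φ β * ψ N (-(2*A*β*δ))) • bas δ := by
    intro φ
    rw [map_sum]
    have h1 : ∀ β : ZMod N, ρ ModularGroup.S (φ β • bas β)
        = ∑ δ : ZMod N, (c * (φ β * ψ N (-(2*A*β*δ)))) • bas δ := by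
      intro β
      rw [_root_.map_smul, hS' β, smul_smul, Finset.smul_sum]
      refine Finset.sum_congr rfl fun δ _ => ?_
      rw [smul_smul]
      congr 1
      ring
    rw [Finset.sum_congr rfl fun β _ => h1 β, Finset.sum_comm]
    refine Finset.sum_congr rfl fun δ _ => ?_
    rw [← Finset.sum_smul]
    congr 1
    rw [Finset.mul_sum]
  have congρ : ∀ (g : SL(2,ℤ)) (x y : ZMod N → ℂ), x = y → ρ g x = ρ g y :=
    fun g x y h => by rw [h]
  have congs : ∀ (x y : ZMod N → ℂ), x = y → c • x = c • y := fun x y h => by rw [h]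
  -- the chain
  calc ρ (ModularGroup.S * ModularGroup.T^m₀' * ModularGroup.S * ModularGroup.T^m₀ *
        ModularGroup.S) (bas γ)
      = ρ ModularGroup.S (ρ (ModularGroup.T^m₀') (ρ ModularGroup.S
          (ρ (ModularGroup.T^m₀) (ρ ModularGroup.S (bas γ))))) := by
        simp only [_root_.map_mul]; rfl
    _ = ρ ModularGroup.S (ρ (ModularGroup.T^m₀') (ρ ModularGroup.S
          (ρ (ModularGroup.T^m₀) (c • ∑ β : ZMod N, ψ N (-(2*A*γ*β)) • bas β)))) := by
        rw [hS' γ]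
    _ = ρ ModularGroup.S (ρ (ModularGroup.T^m₀') (ρ ModularGroup.S
          (c • ∑ β : ZMod N, (ψ N (-(2*A*γ*β)) * ψ N ((m₀ : ZMod N) * (A*β^2))) • bas β))) := by
        rw [_root_.map_smul, stepT]
    _ = ρ ModularGroup.S (ρ (ModularGroup.T^m₀') (ρ ModularGroup.S
          (c • ∑ β : ZMod N, ψ N (A * M₀ * β^2 - 2*A*γ*β) • bas β))) := by
        refine congρ _ _ _ (congρ _ _ _ (congρ _ _ _ (congs _ _
          (Finset.sum_congr rfl fun β _ => ?_))))
        rw [← ψ_add]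
        congr 2
        ring
    _ = ρ ModularGroup.S (ρ (ModularGroup.T^m₀')
          (c • ∑ δ : ZMod N, (c * ∑ β : ZMod N,
            ψ N (A * M₀ * β^2 - 2*A*γ*β) * ψ N (-(2*A*β*δ))) • bas δ)) := by
        rw [_root_.map_smul, stepS]
    _ = ρ ModularGroup.S (ρ (ModularGroup.T^m₀')
          (c • ∑ δ : ZMod N, (c * (GG * ψ N (-(A * M₀' * (γ+δ)^2)))) • bas δ)) := by
        refine congρ _ _ _ (congρ _ _ _ (congs _ _
          (Finset.sum_congr rfl fun δ _ => ?_)))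
        refine congrArg (fun z : ℂ => z • bas δ) (congrArg (fun z : ℂ => c * z) ?_)
        have e1 : ∀ β : ZMod N, ψ N (A * M₀ * β^2 - 2*A*γ*β) * ψ N (-(2*A*β*δ))
            = ψ N (-(A * M₀' * (γ+δ)^2)) * ψ N (A * M₀ * (β - M₀'*(γ+δ))^2) := by
          intro β
          rw [← ψ_add, ← ψ_add]
          congr 1
          linear_combination (2*A*β*(γ+δ) - A * M₀' * (γ+δ)^2) * hm
        calc ∑ β : ZMod N, ψ N (A * M₀ * β^2 - 2*A*γ*β) * ψ N (-(2*A*β*δ))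
            = ∑ β : ZMod N, ψ N (-(A * M₀' * (γ+δ)^2)) * ψ N (A * M₀ * (β - M₀'*(γ+δ))^2) :=
              Finset.sum_congr rfl fun β _ => e1 β
          _ = ψ N (-(A * M₀' * (γ+δ)^2)) * ∑ β : ZMod N, ψ N (A * M₀ * (β - M₀'*(γ+δ))^2) :=
              (Finset.mul_sum _ _ _).symm
          _ = ψ N (-(A * M₀' * (γ+δ)^2)) * GG := by
              rw [Fintype.sum_equiv (Equiv.subRight (M₀'*(γ+δ)))
                (fun β => ψ N (A * M₀ * (β - M₀'*(γ+δ))^2)) (fun β => ψ N (A * M₀ * β^2))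
                (fun β => by simp), ← hGG]
          _ = GG * ψ N (-(A * M₀' * (γ+δ)^2)) := mul_comm _ _
    _ = ρ ModularGroup.S
          (c • ∑ δ : ZMod N, ((c * (GG * ψ N (-(A * M₀' * (γ+δ)^2)))) *
            ψ N (M₀' * (A*δ^2))) • bas δ) := by
        rw [_root_.map_smul, stepT]
    _ = ρ ModularGroup.S
          (c • ∑ δ : ZMod N, ((c * GG) * ψ N (-(A * M₀' * γ^2) + (-(2*A)*(M₀'*γ))*δ)) • bas δ) := by
        refine congρ _ _ _ (congs _ _ (Finset.sum_congr rfl fun δ _ => ?_))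
        refine congrArg (fun z : ℂ => z • bas δ) ?_
        rw [show c * (GG * ψ N (-(A * M₀' * (γ+δ)^2))) * ψ N (M₀' * (A*δ^2))
            = (c * GG) * (ψ N (-(A * M₀' * (γ+δ)^2)) * ψ N (M₀' * (A*δ^2))) from by ring,
          ← ψ_add]
        congr 2
        ring
    _ = c • ∑ ε : ZMod N, (c * ∑ δ : ZMod N,
          ((c * GG) * ψ N (-(A * M₀' * γ^2) + (-(2*A)*(M₀'*γ))*δ)) * ψ N (-(2*A*δ*ε))) • bas ε := by
        rw [_root_.map_smul, stepS]
    _ = c • ∑ ε : ZMod N, (c * ((c * GG * ψ N (-(A * M₀' * γ^2))) *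
          ∑ δ : ZMod N, ψ N ((-(2*A)*(M₀'*γ+ε)) * δ))) • bas ε := by
        refine congs _ _ (Finset.sum_congr rfl fun ε _ => ?_)
        refine congrArg (fun z : ℂ => z • bas ε) (congrArg (fun z : ℂ => c * z) ?_)
        calc ∑ δ : ZMod N, ((c * GG) * ψ N (-(A * M₀' * γ^2) + (-(2*A)*(M₀'*γ))*δ)) *
              ψ N (-(2*A*δ*ε))
            = ∑ δ : ZMod N, ((c * GG) * ψ N (-(A * M₀' * γ^2))) *
              ψ N ((-(2*A)*(M₀'*γ+ε)) * δ) := by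
              refine Finset.sum_congr rfl fun δ _ => ?_
              rw [mul_assoc (c*GG), ← ψ_add, mul_assoc (c*GG), ← ψ_add]
              congr 2
              ring
          _ = (c * GG * ψ N (-(A * M₀' * γ^2))) *
              ∑ δ : ZMod N, ψ N ((-(2*A)*(M₀'*γ+ε)) * δ) := (Finset.mul_sum _ _ _).symm
    _ = c • ∑ ε : ZMod N, (c * ((c * GG * ψ N (-(A * M₀' * γ^2))) *
          (if ε = -(m₀' : ZMod N) * γ then (N:ℂ) else 0))) • bas ε := by
        refine congs _ _ (Finset.sum_congr rfl fun ε _ => ?_)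
        refine congrArg (fun z : ℂ => z • bas ε) ?_
        rw [ψ_orth]
        have hiff : ((-(2*A)*(M₀'*γ+ε)) = 0) ↔ (ε = -(m₀' : ZMod N) * γ) := by
          constructor
          · intro h
            have e0 := h2A (-(M₀'*γ+ε)) (by linear_combination h)
            rw [← hM₀']
            linear_combination -e0
          · intro h
            rw [h, ← hM₀']
            ring
        rw [if_congr hiff rfl rfl]
    _ = (c^3 * (N:ℂ) * GG * ψ N (-(A * M₀' * γ^2))) • bas (-(m₀' : ZMod N) * γ) := by
        simp only [mul_ite, mul_zero, ite_smul, zero_smul]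
        rw [Finset.sum_ite_eq' Finset.univ (-(m₀' : ZMod N) * γ)
          (fun ε => (c * (c * GG * ψ N (-(A * M₀' * γ^2)) * (N:ℂ))) • bas ε)]
        rw [if_pos (Finset.mem_univ _), smul_smul]
        congr 1
        ring

lemma SS_calc (N : ℕ) [NeZero N] (A : ZMod N) (c : ℂ)
    (ρ : SL(2,ℤ) →* ((ZMod N → ℂ) ≃ₗ[ℂ] (ZMod N → ℂ)))
    (hS' : ∀ δ : ZMod N, ρ ModularGroup.S (bas δ) =
      c • ∑ β : ZMod N, ψ N (-(2*A*δ*β)) • bas β)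
    (h2A : ∀ x : ZMod N, 2*A*x = 0 → x = 0) (γ : ZMod N) :
    ρ (ModularGroup.S * ModularGroup.S) (bas γ) = (c^2 * (N:ℂ)) • bas (-γ) := by
  have stepS : ∀ (φ : ZMod N → ℂ),
      ρ ModularGroup.S (∑ β : ZMod N, φ β • bas β)
        = ∑ δ : ZMod N, (c * ∑ β : ZMod N, φ β * ψ N (-(2*A*β*δ))) • bas δ := by
    intro φ
    rw [map_sum]
    have h1 : ∀ β : ZMod N, ρ ModularGroup.S (φ β • bas β)
        = ∑ δ : ZMod N, (c * (φ β * ψ N (-(2*A*β*δ)))) • bas δ := by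
      intro β
      rw [_root_.map_smul, hS' β, smul_smul, Finset.smul_sum]
      refine Finset.sum_congr rfl fun δ _ => ?_
      rw [smul_smul]
      congr 1
      ring
    rw [Finset.sum_congr rfl fun β _ => h1 β, Finset.sum_comm]
    refine Finset.sum_congr rfl fun δ _ => ?_
    rw [← Finset.sum_smul]
    congr 1
    rw [Finset.mul_sum]
  have congs : ∀ (x y : ZMod N → ℂ), x = y → c • x = c • y := fun x y h => by rw [h]
  calc ρ (ModularGroup.S * ModularGroup.S) (bas γ)
      = ρ ModularGroup.S (ρ ModularGroup.S (bas γ)) := by simp only [_root_.map_mul]; rfl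
    _ = ρ ModularGroup.S (c • ∑ β : ZMod N, ψ N (-(2*A*γ*β)) • bas β) := by rw [hS' γ]
    _ = c • ∑ δ : ZMod N, (c * ∑ β : ZMod N, ψ N (-(2*A*γ*β)) * ψ N (-(2*A*β*δ))) • bas δ := by
        rw [_root_.map_smul, stepS]
    _ = c • ∑ δ : ZMod N, (c * ∑ β : ZMod N, ψ N ((-(2*A)*(γ+δ)) * β)) • bas δ := by
        refine congs _ _ (Finset.sum_congr rfl fun δ _ => ?_)
        refine congrArg (fun z : ℂ => z • bas δ) (congrArg (fun z : ℂ => c * z)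
          (Finset.sum_congr rfl fun β _ => ?_))
        rw [← ψ_add]
        congr 1
        ring
    _ = c • ∑ δ : ZMod N, (c * (if δ = -γ then (N:ℂ) else 0)) • bas δ := by
        refine congs _ _ (Finset.sum_congr rfl fun δ _ => ?_)
        refine congrArg (fun z : ℂ => z • bas δ) (congrArg (fun z : ℂ => c * z) ?_)
        rw [ψ_orth]
        have hiff : ((-(2*A)*(γ+δ)) = 0) ↔ (δ = -γ) := by
          constructor
          · intro h
            have e0 := h2A (-(γ+δ)) (by linear_combination h)
            linear_combination -e0
          · intro h
            rw [h]
            ring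
        rw [if_congr hiff rfl rfl]
    _ = (c^2 * (N:ℂ)) • bas (-γ) := by
        simp only [mul_ite, mul_zero, ite_smul, zero_smul]
        rw [Finset.sum_ite_eq' Finset.univ (-γ) (fun δ => (c * (N:ℂ)) • bas δ)]
        rw [if_pos (Finset.mem_univ _), smul_smul]
        congr 1
        ring



end Stmt3Aux

open Stmt3Aux

/-- for the Weil representation `ρ` of `SL₂(ℤ)` on `ℂ L_{pⁿ}(a)`
(characterized by its values on the generators `T` and `S`), and `m m' ≡ 1 (mod pⁿ)`,
one has `ρ(S T^{m'} S T^m S) e^γ = e(-am'γ²/pⁿ) e^{-m'γ}` if `n` is even, and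
`= (-m/p) e(-am'γ²/pⁿ) e^{-m'γ}` if `n` is odd. -/
theorem stmt3 (p : ℕ) [hp : Fact p.Prime] (hp2 : Odd p) (n : ℕ) (hn : 1 ≤ n)
    (a : ℤ) (ha : IsCoprime a (p : ℤ)) (m m' : ℤ) (hmm' : (m * m' : ℤ) ≡ 1 [ZMOD (p ^ n)])
    (ρ : SL(2, ℤ) →* ((ZMod (p ^ n) → ℂ) ≃ₗ[ℂ] (ZMod (p ^ n) → ℂ)))
    (hT : ∀ γ : ZMod (p ^ n), ρ ModularGroup.T (bas γ) =
      eC ((a : ℂ) * (γ.val : ℂ) ^ 2 / (p : ℂ) ^ n) • bas γ)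
    (hS : ∀ γ : ZMod (p ^ n), ρ ModularGroup.S (bas γ) =
      ((sgOdd p n a)⁻¹ / Real.sqrt ((p : ℝ) ^ n)) •
        ∑ β : ZMod (p ^ n),
          eC (-(2 * (a : ℂ) * (γ.val : ℂ) * (β.val : ℂ)) / (p : ℂ) ^ n) • bas β) :
    ∀ γ : ZMod (p ^ n),
      (Even n →
        ρ (ModularGroup.S * ModularGroup.T ^ m' * ModularGroup.S *
            ModularGroup.T ^ m * ModularGroup.S) (bas γ) =
          eC (-((a : ℂ) * (m' : ℂ) * (γ.val : ℂ) ^ 2) / (p : ℂ) ^ n) •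
            bas (-(m' : ZMod (p ^ n)) * γ)) ∧
      (Odd n →
        ρ (ModularGroup.S * ModularGroup.T ^ m' * ModularGroup.S *
            ModularGroup.T ^ m * ModularGroup.S) (bas γ) =
          ((legendreSym p (-m) : ℂ) *
              eC (-((a : ℂ) * (m' : ℂ) * (γ.val : ℂ) ^ 2) / (p : ℂ) ^ n)) •
            bas (-(m' : ZMod (p ^ n)) * γ)) := by
  haveI hNZ : NeZero (p ^ n) := ⟨pow_ne_zero n hp.out.ne_zero⟩
  haveI hNZp : NeZero p := ⟨hp.out.ne_zero⟩
  have hpne2 : p ≠ 2 := by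
    rintro rfl
    exact (by norm_num : ¬ Odd 2) hp2
  set c : ℂ := (sgOdd p n a)⁻¹ / (Real.sqrt ((p : ℝ) ^ n) : ℂ) with hc
  set A : ZMod (p^n) := ((a : ℤ) : ZMod (p^n)) with hA
  set Nc : ℂ := ((p^n : ℕ) : ℂ) with hNc
  -- coprimality facts
  have hcop2 : IsCoprime (2:ℤ) ((p:ℕ):ℤ) := by
    obtain ⟨j, hj⟩ := hp2
    exact ⟨-j, 1, by push_cast [hj]; ring⟩
  have hmcop : IsCoprime (m:ℤ) (((p:ℕ):ℤ)^n) := by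
    obtain ⟨t, ht⟩ := hmm'.dvd
    exact ⟨m', t, by push_cast at ht ⊢; linear_combination -ht⟩
  have hmp : IsCoprime (m:ℤ) ((p:ℕ):ℤ) :=
    (IsCoprime.pow_right_iff (Nat.lt_of_lt_of_le Nat.zero_lt_one hn)).mp hmcop
  have hunit_int : ∀ x : ℤ, IsCoprime x ((p:ℕ):ℤ) → ((x : ZMod p)) ≠ 0 := by
    intro x hx h
    rw [ZMod.intCast_zmod_eq_zero_iff_dvd] at h
    have hu := hx.symm.isUnit_of_dvd' dvd_rfl h
    rw [Int.isUnit_iff] at hu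
    have h2 : (2:ℤ) ≤ (p:ℤ) := by exact_mod_cast hp.out.two_le
    rcases hu with h1 | h1 <;> omega
  have hap : ((a : ZMod p)) ≠ 0 := hunit_int a ha
  have hmp0 : ((m : ZMod p)) ≠ 0 := hunit_int m hmp
  -- h2A
  have hco2a : IsCoprime (2*a : ℤ) (((p:ℕ):ℤ)^n) := (IsCoprime.mul_left hcop2 ha).pow_right
  have hpn0 : ((p : ZMod (p^n)))^n = 0 := by
    have h0 : ((p : ZMod (p^n)))^n = (((p^n : ℕ)) : ZMod (p^n)) := by push_cast; rfl
    rw [h0, ZMod.natCast_self]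
  have h2A : ∀ x : ZMod (p^n), 2*A*x = 0 → x = 0 := by
    obtain ⟨u, v, huv⟩ := hco2a
    have hUone : (u : ZMod (p^n)) * (2 * A) = 1 := by
      have h0 := congrArg (fun z : ℤ => ((z : ZMod (p^n)))) huv
      push_cast at h0
      rw [hpn0, mul_zero, add_zero] at h0
      rw [hA]
      exact h0
    intro x hx
    calc x = ((u : ZMod (p^n)) * (2*A)) * x := by rw [hUone, one_mul]
      _ = (u : ZMod (p^n)) * (2*A*x) := by ring
      _ = 0 := by rw [hx, mul_zero]
  -- bridge between eC and ψ
  have hbridge : ∀ (x : ℤ) (X : ZMod (p^n)), (((x : ZMod (p^n))) = X) →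
      ψ (p^n) X = eC ((x:ℂ)/(p:ℂ)^n) := by
    intro x X hX
    rw [← hX, ψ_intCast, EM]
    congr 1
    push_cast
    ring
  have hS' : ∀ δ : ZMod (p^n), ρ ModularGroup.S (bas δ) =
      c • ∑ β : ZMod (p^n), ψ (p^n) (-(2*A*δ*β)) • bas β := by
    intro δ
    rw [hS δ]
    congr 1
    refine Finset.sum_congr rfl fun β _ => ?_
    congr 1
    rw [hbridge (-(2*a*(δ.val:ℤ)*(β.val:ℤ))) (-(2*A*δ*β))
      (by rw [hA]; push_cast [ZMod.natCast_val, ZMod.cast_id]; ring)]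
    congr 1
    push_cast
    ring
  have hTψ : ∀ δ : ZMod (p^n), ρ ModularGroup.T (bas δ) = ψ (p^n) (A * δ^2) • bas δ := by
    intro δ
    rw [hT δ]
    congr 1
    rw [hbridge (a*(δ.val:ℤ)^2) (A * δ^2)
      (by rw [hA]; push_cast [ZMod.natCast_val, ZMod.cast_id]; ring)]
    congr 1
    push_cast
    ring
  have hT' : ∀ (k : ℤ) (δ : ZMod (p^n)), ρ (ModularGroup.T ^ k) (bas δ) =
      ψ (p^n) ((k : ZMod (p^n)) * (A*δ^2)) • bas δ := by
    intro k δ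
    rw [map_zpow, zpow_apply_smul (ρ ModularGroup.T) (bas δ) (ψ (p^n) (A * δ^2)) (ψ_ne_zero _ _) (hTψ δ) k,
      ψ_zpow]
  -- ZMod equation for m, m'
  have hm1 : ((m : ZMod (p^n))) * ((m' : ZMod (p^n))) = 1 := by
    have h0 : ((m * m' : ℤ) : ZMod (p^n)) = ((1:ℤ) : ZMod (p^n)) := by
      rw [ZMod.intCast_eq_intCast_iff]
      exact_mod_cast hmm'
    push_cast at h0
    exact h0
  have h11 : ((1:ℤ) : ZMod (p^n)) * (((1:ℤ)) : ZMod (p^n)) = 1 := by push_cast; ring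
  -- Gauss sums in EM form
  have hGm : ∀ m₀ : ℤ, (∑ β : ZMod (p^n), ψ (p^n) (A * (m₀ : ZMod (p^n)) * β^2))
      = ∑ β : ZMod (p^n), EM (p^n) ((a*m₀) * (β.val:ℤ)^2) := by
    intro m₀
    refine Finset.sum_congr rfl fun β _ => ?_
    rw [show A * (m₀ : ZMod (p^n)) * β^2 = (((a*m₀) * (β.val:ℤ)^2 : ℤ) : ZMod (p^n)) from by
      rw [hA]; push_cast [ZMod.natCast_val, ZMod.cast_id]; ring, ψ_intCast]
  -- the scalar relation from (ST)^3 = S^2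
  have hrel : c^3 * Nc * (∑ β : ZMod (p^n), ψ (p^n) (A * ((1:ℤ) : ZMod (p^n)) * β^2))
      = c^2 * Nc := by
    have e6 : ρ (S * T^(1:ℤ) * S * T^(1:ℤ) * S * T^(1:ℤ)) (bas 0)
        = (c^3 * Nc * (∑ β : ZMod (p^n), ψ (p^n) (A * ((1:ℤ) : ZMod (p^n)) * β^2))) •
            bas (-(((1:ℤ)) : ZMod (p^n)) * 0) := by
      calc ρ (S * T^(1:ℤ) * S * T^(1:ℤ) * S * T^(1:ℤ)) (bas 0)
          = ρ (S * T^(1:ℤ) * S * T^(1:ℤ) * S) (ρ (T^(1:ℤ)) (bas 0)) := by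
            simp only [_root_.map_mul]; rfl
        _ = ψ (p^n) (((1:ℤ) : ZMod (p^n)) * (A*(0:ZMod (p^n))^2)) •
              ρ (S * T^(1:ℤ) * S * T^(1:ℤ) * S) (bas 0) := by
            rw [hT' 1 0, _root_.map_smul]
        _ = ψ (p^n) (((1:ℤ) : ZMod (p^n)) * (A*(0:ZMod (p^n))^2)) •
              ((c^3 * Nc * (∑ β : ZMod (p^n), ψ (p^n) (A * ((1:ℤ) : ZMod (p^n)) * β^2))
               * ψ (p^n) (-(A * ((1:ℤ) : ZMod (p^n)) * (0:ZMod (p^n))^2))) •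
                bas (-(((1:ℤ)) : ZMod (p^n)) * 0)) := by
            rw [key_calc (p^n) A c ρ hS' hT' h2A 1 1 h11 0]
        _ = (c^3 * Nc * (∑ β : ZMod (p^n), ψ (p^n) (A * ((1:ℤ) : ZMod (p^n)) * β^2))) •
              bas (-(((1:ℤ)) : ZMod (p^n)) * 0) := by
            rw [smul_smul]
            congr 1
            rw [show (((1:ℤ) : ZMod (p^n)) * (A*(0:ZMod (p^n))^2)) = 0 from by push_cast; ring,
              show (-(A * ((1:ℤ) : ZMod (p^n)) * (0:ZMod (p^n))^2)) = 0 from by push_cast; ring,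
              ψ_zero]
            ring
    have e2 : ρ (S * T^(1:ℤ) * S * T^(1:ℤ) * S * T^(1:ℤ)) (bas 0)
        = (c^2 * Nc) • bas (-(((1:ℤ)) : ZMod (p^n)) * 0) := by
      rw [ST_rel, SS_calc (p^n) A c ρ hS' h2A 0]
      congr 1
      push_cast
      ring
    have := e6.symm.trans e2
    have hev := congrFun this (-(((1:ℤ)) : ZMod (p^n)) * 0)
    simpa [bas] using hev
  -- c^2 * Nc value
  have hNcne : Nc ≠ 0 := Nat.cast_ne_zero.mpr (NeZero.ne _)
  have hsqrt : ((Real.sqrt ((p:ℝ)^n) : ℝ) : ℂ)^2 = Nc := by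
    rw [← Complex.ofReal_pow, Real.sq_sqrt (by positivity)]
    rw [hNc]
    push_cast
    ring
  have hc2N : c^2 * Nc = ((sgOdd p n a)⁻¹)^2 := by
    rw [hc, div_pow, hsqrt, div_mul_cancel₀ _ hNcne]
  intro γ
  constructor
  · -- even case
    intro hev
    obtain ⟨k, hk⟩ := hev
    have hpnkk : p^n = p^k * p^k := by rw [← pow_add, hk]
    have hcoam : IsCoprime (2*(a*m) : ℤ) ((p:ℤ)^k) :=
      (IsCoprime.mul_left hcop2 (IsCoprime.mul_left ha hmp)).pow_right
    have hcoa1 : IsCoprime (2*(a*1) : ℤ) ((p:ℤ)^k) := by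
      rw [mul_one]
      exact (IsCoprime.mul_left hcop2 ha).pow_right
    have hGmv : (∑ β : ZMod (p^n), ψ (p^n) (A * ((m:ℤ) : ZMod (p^n)) * β^2)) = (p:ℂ)^k := by
      rw [hGm m, G_even p k (p^n) hpnkk (a*m) hcoam]
    have hG1v : (∑ β : ZMod (p^n), ψ (p^n) (A * ((1:ℤ) : ZMod (p^n)) * β^2)) = (p:ℂ)^k := by
      rw [hGm 1, G_even p k (p^n) hpnkk (a*1) hcoa1]
    have hnodd : ¬ Odd n := by rw [Nat.not_odd_iff_even]; exact ⟨k, hk⟩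
    have hsg1 : sgOdd p n a = 1 := by rw [sgOdd, if_neg hnodd]
    have hscal : c^3 * Nc * (∑ β : ZMod (p^n), ψ (p^n) (A * ((m:ℤ) : ZMod (p^n)) * β^2)) = 1 := by
      rw [hGmv, ← hG1v, hrel, hc2N, hsg1]
      norm_num
    rw [key_calc (p^n) A c ρ hS' hT' h2A m m' hm1 γ]
    rw [show eC (-((a : ℂ) * (m' : ℂ) * (γ.val : ℂ) ^ 2) / (p : ℂ) ^ n)
        = ψ (p^n) (-(A * ((m':ℤ) : ZMod (p^n)) * γ^2)) from by
      rw [hbridge (-(a * m' * (γ.val:ℤ)^2)) (-(A * ((m':ℤ) : ZMod (p^n)) * γ^2))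
        (by rw [hA]; push_cast [ZMod.natCast_val, ZMod.cast_id]; ring)]
      congr 1
      push_cast
      ring]
    rw [hscal, one_mul]
  · -- odd case
    intro hodd
    obtain ⟨l, hl⟩ := hodd
    have hpnll : p^n = p^(l+1) * p^l := by rw [← pow_add, hl]; ring_nf
    have hcoam : IsCoprime (2*(a*m) : ℤ) ((p:ℤ)^l) :=
      (IsCoprime.mul_left hcop2 (IsCoprime.mul_left ha hmp)).pow_right
    have hcoa1 : IsCoprime (2*(a*1) : ℤ) ((p:ℤ)^l) := by
      rw [mul_one]
      exact (IsCoprime.mul_left hcop2 ha).pow_right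
    have hGmv : (∑ β : ZMod (p^n), ψ (p^n) (A * ((m:ℤ) : ZMod (p^n)) * β^2))
        = (p:ℂ)^l * ((legendreSym p m : ℂ) * ∑ w : ZMod p, EM p (a * (w.val:ℤ)^2)) := by
      rw [hGm m, G_odd p l (p^n) hpnll (a*m) hcoam, ratio p hpne2 a m hap hmp0]
    have hG1v : (∑ β : ZMod (p^n), ψ (p^n) (A * ((1:ℤ) : ZMod (p^n)) * β^2))
        = (p:ℂ)^l * ∑ w : ZMod p, EM p (a * (w.val:ℤ)^2) := by
      rw [hGm 1, G_odd p l (p^n) hpnll (a*1) hcoa1]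
      congr 1
      refine Finset.sum_congr rfl fun w _ => ?_
      rw [mul_one]
    have hsgsq : ((sgOdd p n a)⁻¹)^2 = (legendreSym p (-1) : ℂ) := by
      have hodd' : Odd n := ⟨l, hl⟩
      have hLa2 : ((legendreSym p a : ℂ))^2 = 1 := by
        have := legendreSym.sq_one p (a := a) hap
        exact_mod_cast congrArg (fun z : ℤ => (z : ℂ)) this
      have hp41 : p % 4 = 1 ∨ p % 4 = 3 := by
        have := Nat.odd_iff.mp hp2
        omega
      rw [legendreSym.at_neg_one hpne2]
      rcases hp41 with h4 | h4
      · rw [sgOdd, if_pos hodd', if_neg (by omega), ZMod.χ₄_nat_one_mod_four h4]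
        rw [inv_pow, hLa2, inv_one]
        norm_num
      · rw [sgOdd, if_pos hodd', if_pos h4, ZMod.χ₄_nat_three_mod_four h4]
        rw [inv_pow, mul_pow, hLa2, Complex.I_sq, one_mul]
        norm_num
    have hscal : c^3 * Nc * (∑ β : ZMod (p^n), ψ (p^n) (A * ((m:ℤ) : ZMod (p^n)) * β^2))
        = (legendreSym p (-m) : ℂ) := by
      rw [hGmv, show (p:ℂ)^l * ((legendreSym p m : ℂ) * ∑ w : ZMod p, EM p (a * (w.val:ℤ)^2))
          = (legendreSym p m : ℂ) * ((p:ℂ)^l * ∑ w : ZMod p, EM p (a * (w.val:ℤ)^2)) from by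
        ring, ← hG1v]
      rw [show c^3 * Nc * ((legendreSym p m : ℂ) *
          (∑ β : ZMod (p^n), ψ (p^n) (A * ((1:ℤ) : ZMod (p^n)) * β^2)))
          = (legendreSym p m : ℂ) * (c^3 * Nc *
          (∑ β : ZMod (p^n), ψ (p^n) (A * ((1:ℤ) : ZMod (p^n)) * β^2))) from by ring]
      rw [hrel, hc2N, hsgsq]
      rw [show (-m : ℤ) = -1 * m from by ring, legendreSym.mul]
      push_cast
      ring
    rw [key_calc (p^n) A c ρ hS' hT' h2A m m' hm1 γ]
    rw [show eC (-((a : ℂ) * (m' : ℂ) * (γ.val : ℂ) ^ 2) / (p : ℂ) ^ n)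
        = ψ (p^n) (-(A * ((m':ℤ) : ZMod (p^n)) * γ^2)) from by
      rw [hbridge (-(a * m' * (γ.val:ℤ)^2)) (-(A * ((m':ℤ) : ZMod (p^n)) * γ^2))
        (by rw [hA]; push_cast [ZMod.natCast_val, ZMod.cast_id]; ring)]
      congr 1
      push_cast
      ring]
    rw [hscal]
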